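/- arXiv:0805.3824 — 4 statements merged into one kernel-verified Lean document; each statement's English description precedes it below -/
import Mathlib

section
/- Let A ∈ 𝔽_q^{N×n} and suppose ℓ ≥ N. Then for all X ∈ 𝔽_q^{n×m} and Y ∈ 𝔽_q^{N×m}, Δ_A(X,Y) = min over F ∈ 𝔽_q^{N×ℓ} of Δ_{A,F}(X,Y); consequently, for all X, X' ∈ 𝔽_q^{n×m}, δ_A(X,X') = min over F ∈ 𝔽_q^{N×ℓ} of δ_{A,F}(X,X'), and for every code 𝒞 ⊆ 𝔽_q^{n×m} with at least two codewords, δ_A(𝒞) = min over F ∈ 𝔽_q^{N×ℓ} of δ_{A,F}(𝒞). -/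
/-- The coherent discrepancy `Δ_A(X,Y)`: the least `r` such that
`Y = AX + DZ` for some `D ∈ 𝔽_q^{N×r}` and `Z ∈ 𝔽_q^{r×m}`. -/
noncomputable def discA {K : Type*} [Field K] [Fintype K] {n m N : ℕ}
    (A : Matrix (Fin N) (Fin n) K) (X : Matrix (Fin n) (Fin m) K)
    (Y : Matrix (Fin N) (Fin m) K) : ℕ :=
  sInf {r : ℕ | ∃ D : Matrix (Fin N) (Fin r) K, ∃ Z : Matrix (Fin r) (Fin m) K,
    Y = A * X + D * Z}

/-- The Δ-distance `δ_A(X,X') = min_Y (Δ_A(X,Y) + Δ_A(X',Y))`. -/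
noncomputable def deltaA {K : Type*} [Field K] [Fintype K] {n m N : ℕ}
    (A : Matrix (Fin N) (Fin n) K) (X X' : Matrix (Fin n) (Fin m) K) : ℕ :=
  sInf {e : ℕ | ∃ Y : Matrix (Fin N) (Fin m) K, e = discA A X Y + discA A X' Y}

/-- `δ_A(𝒞)`: the minimum Δ-distance over pairs of distinct codewords. -/
noncomputable def deltaACode {K : Type*} [Field K] [Fintype K] {n m N : ℕ}
    (A : Matrix (Fin N) (Fin n) K) (C : Set (Matrix (Fin n) (Fin m) K)) : ℕ :=
  sInf {e : ℕ | ∃ X ∈ C, ∃ X' ∈ C, X ≠ X' ∧ e = deltaA A X X'}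

/-- `wt(E)`: the number of nonzero rows of a matrix `E`. -/
noncomputable def wtRows {K : Type*} [Field K] {a b : ℕ}
    (E : Matrix (Fin a) (Fin b) K) : ℕ :=
  {i : Fin a | E i ≠ 0}.ncard

/-- The discrepancy `Δ_{A,F}(X,Y) = min { wt(E) : Y = AX + FE } ∈ ℕ ∪ {∞}`. -/
noncomputable def discAF {K : Type*} [Field K] [Fintype K] {n m N l : ℕ}
    (A : Matrix (Fin N) (Fin n) K) (F : Matrix (Fin N) (Fin l) K)
    (X : Matrix (Fin n) (Fin m) K) (Y : Matrix (Fin N) (Fin m) K) : ℕ∞ :=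
  sInf {c : ℕ∞ | ∃ E : Matrix (Fin l) (Fin m) K, Y = A * X + F * E ∧ c = (wtRows E : ℕ∞)}

/-- The Δ-distance `δ_{A,F}(X₁,X₂) = min_Y (Δ_{A,F}(X₁,Y) + Δ_{A,F}(X₂,Y))`. -/
noncomputable def deltaAF {K : Type*} [Field K] [Fintype K] {n m N l : ℕ}
    (A : Matrix (Fin N) (Fin n) K) (F : Matrix (Fin N) (Fin l) K)
    (X₁ X₂ : Matrix (Fin n) (Fin m) K) : ℕ∞ :=
  sInf {c : ℕ∞ | ∃ Y : Matrix (Fin N) (Fin m) K, c = discAF A F X₁ Y + discAF A F X₂ Y}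

/-- `δ_{A,F}(𝒞)`: the minimum of `δ_{A,F}` over pairs of distinct codewords. -/
noncomputable def deltaAFCode {K : Type*} [Field K] [Fintype K] {n m N l : ℕ}
    (A : Matrix (Fin N) (Fin n) K) (F : Matrix (Fin N) (Fin l) K)
    (C : Set (Matrix (Fin n) (Fin m) K)) : ℕ∞ :=
  sInf {c : ℕ∞ | ∃ X ∈ C, ∃ X' ∈ C, X ≠ X' ∧ c = deltaAF A F X X'}


section Helpers

/-- Any product `F * E` factors through `Fin (wtRows E)`. -/
lemma wt_factor {K : Type*} [Field K] {m N l : ℕ}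
    (F : Matrix (Fin N) (Fin l) K) (E : Matrix (Fin l) (Fin m) K) :
    ∃ D : Matrix (Fin N) (Fin (wtRows E)) K, ∃ Z : Matrix (Fin (wtRows E)) (Fin m) K,
      F * E = D * Z := by
  classical
  set s : Finset (Fin l) := Finset.univ.filter (fun i => E i ≠ 0) with hs
  have hcard : wtRows E = s.card := by
    rw [wtRows, show {i : Fin l | E i ≠ 0} = ↑s by ext i; simp [hs]]
    exact Set.ncard_coe_finset s
  let e : Fin (wtRows E) ≃ {x // x ∈ s} := (finCongr hcard).trans s.equivFin.symm
  refine ⟨Matrix.of fun j k => F j (e k), Matrix.of fun k c => E (e k) c, ?_⟩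
  ext j c
  simp only [Matrix.mul_apply, Matrix.of_apply]
  rw [Equiv.sum_comp e (fun x : {x // x ∈ s} => F j x.1 * E x.1 c)]
  rw [Finset.sum_coe_sort s (fun i => F j i * E i c)]
  refine (Finset.sum_subset s.subset_univ ?_).symm
  intro i _ hi
  have : E i = 0 := by by_contra h; exact hi (by simp [hs, h])
  simp [this]

/-- If `D` sits in columns `[o, o+r)` of `F`, then `D * Z = F * E` for some `E`
with at most `r` nonzero rows. -/
lemma block_factor {K : Type*} [Field K] {m N l r : ℕ} (o : ℕ) (hor : o + r ≤ l)
    (F : Matrix (Fin N) (Fin l) K) (D : Matrix (Fin N) (Fin r) K)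
    (Z : Matrix (Fin r) (Fin m) K)
    (hF : ∀ j (k : Fin r), F j ⟨o + k.1, by omega⟩ = D j k) :
    ∃ E : Matrix (Fin l) (Fin m) K, F * E = D * Z ∧ wtRows E ≤ r := by
  classical
  set E : Matrix (Fin l) (Fin m) K :=
    fun i c => if h : o ≤ i.1 ∧ i.1 < o + r then Z ⟨i.1 - o, by omega⟩ c else 0 with hE
  set emb : Fin r ↪ Fin l :=
    ⟨fun k => ⟨o + k.1, by omega⟩, fun a b hab => by
      apply Fin.ext; have := Fin.mk.inj_iff.mp hab; omega⟩ with hemb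
  have hembv : ∀ k : Fin r, (emb k : Fin l).1 = o + k.1 := fun k => by simp [hemb]; rfl
  refine ⟨E, ?_, ?_⟩
  · ext j c
    simp only [Matrix.mul_apply]
    have hsub : ∑ i : Fin l, F j i * E i c = ∑ i ∈ Finset.univ.map emb, F j i * E i c := by
      refine (Finset.sum_subset (Finset.subset_univ _) ?_).symm
      intro i _ hi
      have h0 : ¬ (o ≤ i.1 ∧ i.1 < o + r) := by
        intro h
        exact hi (Finset.mem_map.mpr ⟨⟨i.1 - o, by omega⟩, Finset.mem_univ _, by
          apply Fin.ext; rw [hembv, Fin.val_mk]; omega⟩)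
      simp [hE, h0]
    rw [hsub, Finset.sum_map]
    refine Finset.sum_congr rfl (fun k _ => ?_)
    have h1 : F j (emb k) = D j k := by
      have : emb k = ⟨o + k.1, by omega⟩ := Fin.ext (hembv k)
      rw [this]; exact hF j k
    have h2 : E (emb k) c = Z k c := by
      have hc : o ≤ (emb k : Fin l).1 ∧ (emb k : Fin l).1 < o + r := by
        rw [hembv]; omega
      simp only [hE]
      rw [dif_pos hc]
      congr 1
      apply Fin.ext; rw [Fin.val_mk, hembv, Fin.val_mk]; omega
    rw [h1, h2]
  · have hsub : {i : Fin l | E i ≠ 0} ⊆ ↑(Finset.univ.map emb) := by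
      intro i hi
      have h0 : o ≤ i.1 ∧ i.1 < o + r := by
        by_contra h
        exact hi (by funext c; simp [hE, h])
      exact Finset.mem_coe.mpr (Finset.mem_map.mpr ⟨⟨i.1 - o, by omega⟩, Finset.mem_univ _, by
        apply Fin.ext; rw [hembv, Fin.val_mk]; omega⟩)
    calc wtRows E ≤ (↑(Finset.univ.map emb) : Set (Fin l)).ncard :=
          Set.ncard_le_ncard hsub (Finset.finite_toSet _)
      _ = r := by rw [Set.ncard_coe_finset]; simp

variable {K : Type*} [Field K] [Fintype K] {n m N l : ℕ}

lemma discA_set_nonempty (A : Matrix (Fin N) (Fin n) K) (X : Matrix (Fin n) (Fin m) K)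
    (Y : Matrix (Fin N) (Fin m) K) :
    {r : ℕ | ∃ D : Matrix (Fin N) (Fin r) K, ∃ Z : Matrix (Fin r) (Fin m) K,
      Y = A * X + D * Z}.Nonempty :=
  ⟨N, 1, Y - A * X, by simp⟩

lemma discA_le_N (A : Matrix (Fin N) (Fin n) K) (X : Matrix (Fin n) (Fin m) K)
    (Y : Matrix (Fin N) (Fin m) K) : discA A X Y ≤ N :=
  Nat.sInf_le (show N ∈ {r : ℕ | ∃ D : Matrix (Fin N) (Fin r) K,
    ∃ Z : Matrix (Fin r) (Fin m) K, Y = A * X + D * Z} from ⟨1, Y - A * X, by simp⟩)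

lemma discA_spec (A : Matrix (Fin N) (Fin n) K) (X : Matrix (Fin n) (Fin m) K)
    (Y : Matrix (Fin N) (Fin m) K) :
    ∃ D : Matrix (Fin N) (Fin (discA A X Y)) K, ∃ Z, Y = A * X + D * Z :=
  Nat.sInf_mem (discA_set_nonempty A X Y)

lemma discA_self (A : Matrix (Fin N) (Fin n) K) (X : Matrix (Fin n) (Fin m) K) :
    discA A X (A * X) = 0 :=
  Nat.eq_zero_of_le_zero (Nat.sInf_le ⟨0, 0, by simp⟩)

/-- `Δ_A ≤ Δ_{A,F}` for every `F`. -/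
lemma discA_le_discAF (A : Matrix (Fin N) (Fin n) K) (F : Matrix (Fin N) (Fin l) K)
    (X : Matrix (Fin n) (Fin m) K) (Y : Matrix (Fin N) (Fin m) K) :
    (discA A X Y : ℕ∞) ≤ discAF A F X Y := by
  refine le_sInf fun c hc => ?_
  obtain ⟨E, hE, rfl⟩ := hc
  rw [Nat.cast_le]
  obtain ⟨D, Z, hDZ⟩ := wt_factor F E
  exact Nat.sInf_le ⟨D, Z, by rw [hE, hDZ]⟩

/-- Some `F` attains `Δ_A`. -/
lemma exists_discAF_le (hNl : N ≤ l) (A : Matrix (Fin N) (Fin n) K)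
    (X : Matrix (Fin n) (Fin m) K) (Y : Matrix (Fin N) (Fin m) K) :
    ∃ F : Matrix (Fin N) (Fin l) K, discAF A F X Y ≤ (discA A X Y : ℕ∞) := by
  obtain ⟨D, Z, hDZ⟩ := discA_spec A X Y
  have hrl : discA A X Y ≤ l := (discA_le_N A X Y).trans hNl
  set F : Matrix (Fin N) (Fin l) K :=
    fun j i => if h : i.1 < discA A X Y then D j ⟨i.1, h⟩ else 0 with hF
  obtain ⟨E, hFE, hwt⟩ := block_factor 0 (by omega) F D Z (fun j k => by
    have h : (0 : ℕ) + k.1 < discA A X Y := by have := k.2; omega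
    simp only [hF]
    rw [dif_pos h]
    congr 1
    apply Fin.ext; simp)
  have hmem : (wtRows E : ℕ∞) ∈ {c : ℕ∞ | ∃ E' : Matrix (Fin l) (Fin m) K,
      Y = A * X + F * E' ∧ c = (wtRows E' : ℕ∞)} := ⟨E, by rw [hDZ, hFE]; rfl, rfl⟩
  exact ⟨F, (sInf_le hmem).trans (Nat.cast_le.mpr hwt)⟩

lemma deltaA_set_nonempty (A : Matrix (Fin N) (Fin n) K)
    (X X' : Matrix (Fin n) (Fin m) K) :
    {e : ℕ | ∃ Y : Matrix (Fin N) (Fin m) K, e = discA A X Y + discA A X' Y}.Nonempty :=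
  ⟨_, A * X, rfl⟩

lemma deltaA_spec (A : Matrix (Fin N) (Fin n) K) (X X' : Matrix (Fin n) (Fin m) K) :
    ∃ Y : Matrix (Fin N) (Fin m) K, deltaA A X X' = discA A X Y + discA A X' Y :=
  Nat.sInf_mem (deltaA_set_nonempty A X X')

lemma deltaA_le_N (A : Matrix (Fin N) (Fin n) K) (X X' : Matrix (Fin n) (Fin m) K) :
    deltaA A X X' ≤ N := by
  have h1 : deltaA A X X' ≤ discA A X (A * X) + discA A X' (A * X) :=
    Nat.sInf_le ⟨A * X, rfl⟩
  have h2 := discA_le_N A X' (A * X)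
  rw [discA_self] at h1
  omega

/-- `δ_A ≤ δ_{A,F}` for every `F`. -/
lemma deltaA_le_deltaAF (A : Matrix (Fin N) (Fin n) K) (F : Matrix (Fin N) (Fin l) K)
    (X X' : Matrix (Fin n) (Fin m) K) :
    (deltaA A X X' : ℕ∞) ≤ deltaAF A F X X' := by
  refine le_sInf fun c hc => ?_
  obtain ⟨Y, rfl⟩ := hc
  calc (deltaA A X X' : ℕ∞) ≤ ((discA A X Y + discA A X' Y : ℕ) : ℕ∞) :=
        Nat.cast_le.mpr (Nat.sInf_le ⟨Y, rfl⟩)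
    _ = (discA A X Y : ℕ∞) + (discA A X' Y : ℕ∞) := by rw [Nat.cast_add]
    _ ≤ discAF A F X Y + discAF A F X' Y :=
        add_le_add (discA_le_discAF A F X Y) (discA_le_discAF A F X' Y)

/-- Some `F` attains `δ_A`. -/
lemma exists_deltaAF_le (hNl : N ≤ l) (A : Matrix (Fin N) (Fin n) K)
    (X X' : Matrix (Fin n) (Fin m) K) :
    ∃ F : Matrix (Fin N) (Fin l) K, deltaAF A F X X' ≤ (deltaA A X X' : ℕ∞) := by
  obtain ⟨Y, hY⟩ := deltaA_spec A X X'
  obtain ⟨D₁, Z₁, hDZ₁⟩ := discA_spec A X Y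
  obtain ⟨D₂, Z₂, hDZ₂⟩ := discA_spec A X' Y
  have hrl : discA A X Y + discA A X' Y ≤ l := by
    have h1 := deltaA_le_N A X X'
    rw [hY] at h1
    omega
  set F : Matrix (Fin N) (Fin l) K :=
    fun j i => if h : i.1 < discA A X Y then D₁ j ⟨i.1, h⟩
      else if h2 : i.1 - discA A X Y < discA A X' Y then D₂ j ⟨i.1 - discA A X Y, h2⟩
      else 0 with hF
  obtain ⟨E₁, hFE₁, hwt₁⟩ := block_factor 0 (by omega) F D₁ Z₁ (fun j k => by
    have h : (0 : ℕ) + k.1 < discA A X Y := by have := k.2; omega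
    simp only [hF]
    rw [dif_pos h]
    congr 1
    apply Fin.ext; simp)
  obtain ⟨E₂, hFE₂, hwt₂⟩ := block_factor (discA A X Y) (by omega) F D₂ Z₂ (fun j k => by
    have h1 : ¬ (discA A X Y + k.1 < discA A X Y) := by omega
    have h2 : discA A X Y + k.1 - discA A X Y < discA A X' Y := by have := k.2; omega
    simp only [hF]
    rw [dif_neg h1, dif_pos h2]
    congr 1
    apply Fin.ext; simp)
  refine ⟨F, ?_⟩
  have hmem₁ : (wtRows E₁ : ℕ∞) ∈ {c : ℕ∞ | ∃ E' : Matrix (Fin l) (Fin m) K,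
      Y = A * X + F * E' ∧ c = (wtRows E' : ℕ∞)} := ⟨E₁, by rw [hDZ₁, hFE₁]; rfl, rfl⟩
  have hmem₂ : (wtRows E₂ : ℕ∞) ∈ {c : ℕ∞ | ∃ E' : Matrix (Fin l) (Fin m) K,
      Y = A * X' + F * E' ∧ c = (wtRows E' : ℕ∞)} := ⟨E₂, by rw [hDZ₂, hFE₂]; rfl, rfl⟩
  have hd₁ : discAF A F X Y ≤ (discA A X Y : ℕ∞) :=
    (sInf_le hmem₁).trans (Nat.cast_le.mpr hwt₁)
  have hd₂ : discAF A F X' Y ≤ (discA A X' Y : ℕ∞) :=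
    (sInf_le hmem₂).trans (Nat.cast_le.mpr hwt₂)
  have hmemY : discAF A F X Y + discAF A F X' Y ∈ {c : ℕ∞ |
      ∃ Y' : Matrix (Fin N) (Fin m) K, c = discAF A F X Y' + discAF A F X' Y'} := ⟨Y, rfl⟩
  calc deltaAF A F X X' ≤ discAF A F X Y + discAF A F X' Y := sInf_le hmemY
    _ ≤ (discA A X Y : ℕ∞) + (discA A X' Y : ℕ∞) := add_le_add hd₁ hd₂
    _ = ((discA A X Y + discA A X' Y : ℕ) : ℕ∞) := by rw [Nat.cast_add]
    _ = (deltaA A X X' : ℕ∞) := by rw [hY]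

end Helpers

/-- If `ℓ ≥ N`, then `Δ_A(X,Y) = min_F Δ_{A,F}(X,Y)`; consequently
`δ_A(X,X') = min_F δ_{A,F}(X,X')` and `δ_A(𝒞) = min_F δ_{A,F}(𝒞)`. -/
theorem discA_eq_min_discAF {K : Type*} [Field K] [Fintype K] {n m N l : ℕ}
    (hn : 0 < n) (hm : 0 < m) (hN : 0 < N) (hNl : N ≤ l)
    (A : Matrix (Fin N) (Fin n) K)
    (C : Set (Matrix (Fin n) (Fin m) K)) (hC : ∃ X ∈ C, ∃ X' ∈ C, X ≠ X') :
    (∀ (X : Matrix (Fin n) (Fin m) K) (Y : Matrix (Fin N) (Fin m) K),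
        (discA A X Y : ℕ∞) = ⨅ F : Matrix (Fin N) (Fin l) K, discAF A F X Y) ∧
      (∀ X X' : Matrix (Fin n) (Fin m) K,
        (deltaA A X X' : ℕ∞) = ⨅ F : Matrix (Fin N) (Fin l) K, deltaAF A F X X') ∧
      (deltaACode A C : ℕ∞) = ⨅ F : Matrix (Fin N) (Fin l) K, deltaAFCode A F C := by
  constructor
  · intro X Y
    refine le_antisymm (le_iInf fun F => discA_le_discAF A F X Y) ?_
    obtain ⟨F, hF⟩ := exists_discAF_le hNl A X Y
    exact iInf_le_of_le F hF
  constructor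
  · intro X X'
    refine le_antisymm (le_iInf fun F => deltaA_le_deltaAF A F X X') ?_
    obtain ⟨F, hF⟩ := exists_deltaAF_le hNl A X X'
    exact iInf_le_of_le F hF
  · have hne : {e : ℕ | ∃ X ∈ C, ∃ X' ∈ C, X ≠ X' ∧ e = deltaA A X X'}.Nonempty := by
      obtain ⟨X, hX, X', hX', hXX'⟩ := hC
      exact ⟨_, X, hX, X', hX', hXX', rfl⟩
    refine le_antisymm (le_iInf fun F => ?_) ?_
    · refine le_sInf fun c hc => ?_
      obtain ⟨X, hX, X', hX', hXX', rfl⟩ := hc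
      calc (deltaACode A C : ℕ∞) ≤ (deltaA A X X' : ℕ∞) :=
            Nat.cast_le.mpr (Nat.sInf_le ⟨X, hX, X', hX', hXX', rfl⟩)
        _ ≤ deltaAF A F X X' := deltaA_le_deltaAF A F X X'
    · obtain ⟨X, hX, X', hX', hXX', hval⟩ := Nat.sInf_mem hne
      obtain ⟨F, hF⟩ := exists_deltaAF_le hNl A X X'
      refine iInf_le_of_le F ?_
      have hmem : deltaAF A F X X' ∈ {c : ℕ∞ | ∃ X₀ ∈ C, ∃ X₀' ∈ C, X₀ ≠ X₀' ∧
          c = deltaAF A F X₀ X₀'} := ⟨X, hX, X', hX', hXX', rfl⟩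
      calc deltaAFCode A F C ≤ deltaAF A F X X' := sInf_le hmem
        _ ≤ (deltaA A X X' : ℕ∞) := hF
        _ = (deltaACode A C : ℕ∞) := by
            rw [show deltaACode A C = deltaA A X X' from hval]
end

section
/- Let m ≥ n and let 𝒞 ⊆ 𝔽_q^{n×m} be a maximum-rank-distance code, i.e., |𝒞| = q^{m(n − d_R(𝒞) + 1)}. Let A ∈ 𝔽_q^{N×n} have column-rank deficiency ρ = n − rank A. Then 𝒞 is guaranteed to correct t packet errors (i.e., 𝒞 is t-discrepancy-correcting for Δ_A) if and only if d_R(𝒞) > 2t + ρ. -/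
/-- The minimum rank distance `d_R(𝒞)` over pairs of distinct codewords,
where `d_R(X,X') = rank (X' − X)`. -/
noncomputable def rankDistCode {K : Type*} [Field K] [Fintype K] {n m : ℕ}
    (C : Set (Matrix (Fin n) (Fin m) K)) : ℕ :=
  sInf {e : ℕ | ∃ X ∈ C, ∃ X' ∈ C, X ≠ X' ∧ e = (X' - X).rank}

/-- A code `C` is `t`-discrepancy-correcting for a discrepancy function `Δ` if
no output is within discrepancy `t` of two distinct codewords. -/
def Correcting {α β : Type*} (Δ : α → β → ℕ) (C : Set α) (t : ℕ) : Prop :=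
  ∀ x ∈ C, ∀ x' ∈ C, x ≠ x' → ∀ y : β, ¬(Δ x y ≤ t ∧ Δ x' y ≤ t)

set_option linter.unusedVariables false

section Aux

open Matrix Module

variable {K : Type*} [Field K]

variable {K : Type*} [Field K]

/-- Rank factorization: a matrix of rank at most `r` factors through `K^r`. -/
lemma matrix_exists_factor {a b r : ℕ} (M : Matrix (Fin a) (Fin b) K) (h : M.rank ≤ r) :
    ∃ (D : Matrix (Fin a) (Fin r) K) (Z : Matrix (Fin r) (Fin b) K), M = D * Z := by
  classical
  set V := LinearMap.range M.mulVecLin with hV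
  have hfr : finrank K V = M.rank := rfl
  let bV : Basis (Fin M.rank) K V := (Module.finBasis K V).reindex (finCongr hfr)
  have hcol : ∀ c : Fin b, (fun x => M x c) ∈ V := by
    intro c
    refine ⟨Pi.single c 1, ?_⟩
    ext x
    simp [Matrix.mulVecLin_apply]
  set D : Matrix (Fin a) (Fin r) K := fun x i =>
    if h' : (i : ℕ) < M.rank then (bV ⟨i, h'⟩ : Fin a → K) x else 0 with hD
  set Z : Matrix (Fin r) (Fin b) K := fun i c =>
    if h' : (i : ℕ) < M.rank then bV.repr ⟨fun x => M x c, hcol c⟩ ⟨i, h'⟩ else 0 with hZ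
  refine ⟨D, Z, ?_⟩
  ext x c
  rw [Matrix.mul_apply]
  set v : V := ⟨fun x => M x c, hcol c⟩ with hv
  have key : (∑ j : Fin M.rank, bV.repr v j • bV j : V) = v := bV.sum_repr v
  have key2 : ∑ j : Fin M.rank, bV.repr v j • (bV j : Fin a → K) x = M x c := by
    have h1 := congrArg (fun w : V => (w : Fin a → K) x) key
    simp only [Submodule.coe_sum, Submodule.coe_smul, Finset.sum_apply, Pi.smul_apply] at h1
    exact h1
  let emb : Fin M.rank ↪ Fin r := ⟨Fin.castLE h, Fin.castLE_injective h⟩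
  have hsum : ∑ i : Fin r, D x i * Z i c
      = ∑ i ∈ Finset.univ.map emb, D x i * Z i c := by
    refine (Finset.sum_subset (Finset.subset_univ _) ?_).symm
    intro i _ hi
    have h' : ¬ ((i : ℕ) < M.rank) := by
      intro hlt
      exact hi (Finset.mem_map.mpr ⟨⟨(i : ℕ), hlt⟩, Finset.mem_univ _, Fin.ext rfl⟩)
    simp [hD, hZ, h']
  rw [hsum, Finset.sum_map]
  have hterm : ∀ j : Fin M.rank, D x (emb j) * Z (emb j) c
      = bV.repr v j • (bV j : Fin a → K) x := by
    intro j
    have hj : ((emb j : Fin r) : ℕ) < M.rank := j.isLt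
    have hjj : (⟨((emb j : Fin r) : ℕ), hj⟩ : Fin M.rank) = j := Fin.ext rfl
    simp only [hD, hZ, dif_pos hj, hjj, hv, smul_eq_mul]
    ring
  rw [Finset.sum_congr rfl fun j _ => hterm j]
  exact key2.symm

lemma matrix_eq_zero_of_rank_eq_zero {a b : ℕ} {M : Matrix (Fin a) (Fin b) K}
    (h : M.rank = 0) : M = 0 := by
  have hr : LinearMap.range M.mulVecLin = ⊥ := by
    rw [Matrix.rank] at h
    exact Submodule.finrank_eq_zero.mp h
  ext i j
  have hmem : M.mulVec (Pi.single j 1) ∈ LinearMap.range M.mulVecLin :=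
    LinearMap.mem_range_self _ _
  rw [hr, Submodule.mem_bot] at hmem
  have := congrFun hmem i
  simpa using this

lemma matrix_rank_add_le {a b : ℕ} (P Q : Matrix (Fin a) (Fin b) K) :
    (P + Q).rank ≤ P.rank + Q.rank := by
  have hle : LinearMap.range (P + Q).mulVecLin
      ≤ LinearMap.range P.mulVecLin ⊔ LinearMap.range Q.mulVecLin := by
    rintro x ⟨v, rfl⟩
    have hx : (P + Q).mulVecLin v = P.mulVec v + Q.mulVec v := by
      simp [Matrix.mulVecLin_apply, Matrix.add_mulVec]
    rw [hx]
    exact Submodule.add_mem_sup (LinearMap.mem_range_self _ _) (LinearMap.mem_range_self _ _)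
  calc (P + Q).rank
      ≤ finrank K ↥(LinearMap.range P.mulVecLin ⊔ LinearMap.range Q.mulVecLin) :=
        Submodule.finrank_mono hle
    _ ≤ P.rank + Q.rank := Submodule.finrank_add_le_finrank_add_finrank _ _

/-- Sylvester-type rank inequality. -/
lemma matrix_sylvester {n m N : ℕ} (A : Matrix (Fin N) (Fin n) K)
    (M : Matrix (Fin n) (Fin m) K) :
    M.rank ≤ (A * M).rank + (n - A.rank) := by
  classical
  set f := A.mulVecLin with hf
  set V := LinearMap.range M.mulVecLin with hVdef
  have h1 := LinearMap.finrank_range_add_finrank_ker (f.domRestrict V)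
  have hmap : Submodule.map f V = LinearMap.range ((A * M).mulVecLin) := by
    rw [Matrix.mulVecLin_mul]
    exact (LinearMap.range_comp _ _).symm
  have h2 : finrank K (LinearMap.range (f.domRestrict V)) = (A * M).rank := by
    rw [LinearMap.range_domRestrict, hmap]
    rfl
  have h3 : finrank K (LinearMap.ker (f.domRestrict V)) ≤ finrank K (LinearMap.ker f) := by
    have hmem : ∀ x : LinearMap.ker (f.domRestrict V), ((x : V) : Fin n → K) ∈ LinearMap.ker f := by
      rintro ⟨⟨x, hxV⟩, hx⟩
      simpa [LinearMap.mem_ker, LinearMap.domRestrict_apply] using hx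
    let g : LinearMap.ker (f.domRestrict V) →ₗ[K] LinearMap.ker f :=
      LinearMap.codRestrict _ (V.subtype.comp (LinearMap.ker (f.domRestrict V)).subtype) hmem
    have hg : Function.Injective g := by
      intro x y hxy
      have h' := congrArg (fun z : LinearMap.ker f => (z : Fin n → K)) hxy
      simp only [g, LinearMap.codRestrict_apply, LinearMap.comp_apply,
        Submodule.subtype_apply] at h'
      exact Subtype.ext (Subtype.ext h')
    exact LinearMap.finrank_le_finrank_of_injective hg
  have h4 : finrank K (LinearMap.range f) + finrank K (LinearMap.ker f) = n := by
    have := LinearMap.finrank_range_add_finrank_ker f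
    simpa using this
  have h5 : finrank K (LinearMap.range f) = A.rank := rfl
  have h6 : finrank K V = M.rank := rfl
  omega

/-- Rank of a matrix whose first `s` rows vanish. -/
lemma matrix_rank_le_of_rows_zero {k m s : ℕ} (M : Matrix (Fin k) (Fin m) K)
    (h : ∀ (i : Fin k) (j : Fin m), (i : ℕ) < s → M i j = 0) :
    M.rank ≤ k - s := by
  classical
  by_cases hs : s ≤ k
  · set E : Matrix (Fin k) (Fin (k - s)) K := fun i l =>
      if (i : ℕ) = s + (l : ℕ) then 1 else 0 with hE
    set M' : Matrix (Fin (k - s)) (Fin m) K := fun l j =>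
      M ⟨s + (l : ℕ), by omega⟩ j with hM'
    have hfac : M = E * M' := by
      ext i j
      rw [Matrix.mul_apply]
      by_cases hi : (i : ℕ) < s
      · rw [h i j hi]
        symm
        apply Finset.sum_eq_zero
        intro l _
        have hno : ¬ ((i : ℕ) = s + (l : ℕ)) := by omega
        simp [hE, hno]
      · have hl : (i : ℕ) - s < k - s := by omega
        set l₀ : Fin (k - s) := ⟨(i : ℕ) - s, hl⟩ with hl₀
        have hl₀v : (l₀ : ℕ) = (i : ℕ) - s := rfl
        rw [Finset.sum_eq_single l₀]
        · have hE1 : E i l₀ = 1 := by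
            simp only [hE]
            rw [if_pos (by omega)]
          have hM1 : M' l₀ j = M i j := by
            simp only [hM']
            congr 1
            exact Fin.ext (by simp only [hl₀v]; omega)
          rw [hE1, hM1, one_mul]
        · intro l _ hne
          have hno : ¬ ((i : ℕ) = s + (l : ℕ)) := by
            intro heq
            exact hne (Fin.ext (by omega))
          simp [hE, hno]
        · intro habs
          exact absurd (Finset.mem_univ _) habs
    rw [hfac]
    calc (E * M').rank ≤ M'.rank := Matrix.rank_mul_le_right _ _
      _ ≤ k - s := by
          have := Matrix.rank_le_card_height M'
          simpa using this
  · have hM0 : M = 0 := by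
      ext i j
      exact h i j (by omega)
    rw [hM0, Matrix.rank_zero]
    exact Nat.zero_le _

/-- Singleton bound for rank-metric codes. -/
lemma matrix_singleton_bound [Fintype K] {k m d' : ℕ} (hd' : 1 ≤ d')
    (C : Set (Matrix (Fin k) (Fin m) K))
    (h : ∀ X ∈ C, ∀ X' ∈ C, X ≠ X' → d' ≤ (X' - X).rank) :
    C.ncard ≤ Fintype.card K ^ (m * (k + 1 - d')) := by
  classical
  set s := k + 1 - d' with hsdef
  have hs : s ≤ k := by omega
  set ψ : Matrix (Fin k) (Fin m) K → Matrix (Fin s) (Fin m) K :=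
    fun X => fun i j => X (Fin.castLE hs i) j with hψ
  have hinj : Set.InjOn ψ C := by
    intro X hX X' hX' he
    by_contra hne
    have hd := h X hX X' hX' hne
    have hzero : ∀ (i : Fin k) (j : Fin m), (i : ℕ) < s → (X' - X) i j = 0 := by
      intro i j hi
      have h1 := congrFun (congrFun he ⟨(i : ℕ), hi⟩) j
      have h2 : Fin.castLE hs (⟨(i : ℕ), hi⟩ : Fin s) = i := Fin.ext rfl
      simp only [hψ, h2] at h1
      simp [Matrix.sub_apply, h1]
    have := matrix_rank_le_of_rows_zero (X' - X) hzero
    omega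
  have hcard : (ψ '' C).ncard ≤ Fintype.card (Matrix (Fin s) (Fin m) K) := by
    have h1 := Set.ncard_le_ncard (Set.subset_univ (ψ '' C)) (Set.toFinite _)
    rwa [Set.ncard_univ, Nat.card_eq_fintype_card] at h1
  have hcm : Fintype.card (Matrix (Fin s) (Fin m) K) = Fintype.card K ^ (m * s) := by
    show Fintype.card (Fin s → Fin m → K) = _
    rw [Fintype.card_fun, Fintype.card_fun, Fintype.card_fin, Fintype.card_fin,
      ← pow_mul]
  calc C.ncard = (ψ '' C).ncard := (Set.ncard_image_of_injOn hinj).symm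
    _ ≤ Fintype.card K ^ (m * s) := by rw [← hcm]; exact hcard

lemma discA_eq [Fintype K] {n m N : ℕ} (A : Matrix (Fin N) (Fin n) K)
    (X : Matrix (Fin n) (Fin m) K) (Y : Matrix (Fin N) (Fin m) K) :
    discA A X Y = (Y - A * X).rank := by
  have hset : {r : ℕ | ∃ D : Matrix (Fin N) (Fin r) K, ∃ Z : Matrix (Fin r) (Fin m) K,
      Y = A * X + D * Z} = Set.Ici (Y - A * X).rank := by
    ext r
    simp only [Set.mem_setOf_eq, Set.mem_Ici]
    constructor
    · rintro ⟨D, Z, rfl⟩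
      have h1 : A * X + D * Z - A * X = D * Z := by abel
      rw [h1]
      calc (D * Z).rank ≤ D.rank := Matrix.rank_mul_le_left _ _
        _ ≤ r := by simpa using Matrix.rank_le_card_width D
    · intro hr
      obtain ⟨D, Z, hDZ⟩ := matrix_exists_factor (Y - A * X) hr
      exact ⟨D, Z, by rw [← hDZ]; abel⟩
  rw [discA, hset, csInf_Ici]

lemma correcting_iff_rank [Fintype K] {n m N : ℕ} (A : Matrix (Fin N) (Fin n) K)
    (C : Set (Matrix (Fin n) (Fin m) K)) (t : ℕ) :
    Correcting (discA A) C t ↔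
      ∀ X ∈ C, ∀ X' ∈ C, X ≠ X' → 2 * t < (A * (X' - X)).rank := by
  constructor
  · intro h X hX X' hX' hne
    by_contra hle
    push_neg at hle
    have hle' : (A * (X' - X)).rank ≤ t + t := by omega
    obtain ⟨D, Z, hDZ⟩ := matrix_exists_factor (A * (X' - X)) hle'
    set D₁ : Matrix (Fin N) (Fin t) K := fun x i => D x (Fin.castAdd t i) with hD₁
    set Z₁ : Matrix (Fin t) (Fin m) K := fun i j => Z (Fin.castAdd t i) j with hZ₁
    set D₂ : Matrix (Fin N) (Fin t) K := fun x i => D x (Fin.natAdd t i) with hD₂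
    set Z₂ : Matrix (Fin t) (Fin m) K := fun i j => Z (Fin.natAdd t i) j with hZ₂
    have hsplit : D * Z = D₁ * Z₁ + D₂ * Z₂ := by
      ext x y
      simp only [Matrix.mul_apply, Matrix.add_apply, hD₁, hZ₁, hD₂, hZ₂]
      rw [Fin.sum_univ_add (f := fun i : Fin (t + t) => D x i * Z i y)]
      rfl
    refine h X hX X' hX' hne (A * X + D₁ * Z₁) ⟨?_, ?_⟩
    · rw [discA_eq]
      have h1 : A * X + D₁ * Z₁ - A * X = D₁ * Z₁ := by abel
      rw [h1]
      calc (D₁ * Z₁).rank ≤ D₁.rank := Matrix.rank_mul_le_left _ _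
        _ ≤ t := by simpa using Matrix.rank_le_card_width D₁
    · rw [discA_eq]
      have h1 : A * X + D₁ * Z₁ - A * X' = (-D₂) * Z₂ := by
        have h2 : A * X' - A * X = D₁ * Z₁ + D₂ * Z₂ := by
          rw [← hsplit, ← hDZ, Matrix.mul_sub]
        have h3 : (-D₂) * Z₂ = -(D₂ * Z₂) := by rw [Matrix.neg_mul]
        rw [h3]
        have h4 : A * X = A * X' - (D₁ * Z₁ + D₂ * Z₂) := by rw [← h2]; abel
        rw [h4]
        abel
      rw [h1]
      calc ((-D₂) * Z₂).rank ≤ (-D₂).rank := Matrix.rank_mul_le_left _ _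
        _ ≤ t := by simpa using Matrix.rank_le_card_width (-D₂)
  · intro h X hX X' hX' hne Y hY
    obtain ⟨h1, h2⟩ := hY
    rw [discA_eq] at h1 h2
    have hspec := h X hX X' hX' hne
    obtain ⟨D, Z, hDZ⟩ := matrix_exists_factor (Y - A * X') h2
    have hkey : A * (X' - X) = (Y - A * X) + (-D) * Z := by
      rw [Matrix.neg_mul, ← hDZ, Matrix.mul_sub]
      abel
    have : (A * (X' - X)).rank ≤ t + t := by
      rw [hkey]
      calc ((Y - A * X) + (-D) * Z).rank
          ≤ (Y - A * X).rank + ((-D) * Z).rank := matrix_rank_add_le _ _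
        _ ≤ t + t := by
            have h5 : ((-D) * Z).rank ≤ t := by
              calc ((-D) * Z).rank ≤ (-D).rank := Matrix.rank_mul_le_left _ _
                _ ≤ t := by simpa using Matrix.rank_le_card_width (-D)
            omega
    omega


end Aux

/-- An MRD code `𝒞 ⊆ 𝔽_q^{n×m}` with `m ≥ n` (i.e. a code achieving the
Singleton bound `|𝒞| = q^{m(n − d_R(𝒞) + 1)}`) corrects `t` packet errors
under column-rank deficiency `ρ = n − rank A` if and only if
`d_R(𝒞) > 2t + ρ`. -/
theorem mrd_correcting_iff {K : Type*} [Field K] [Fintype K] {n m N : ℕ}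
    (hn : 0 < n) (hN : 0 < N) (hnm : n ≤ m)
    (A : Matrix (Fin N) (Fin n) K) (ρ : ℕ) (hρ : ρ = n - A.rank)
    (C : Set (Matrix (Fin n) (Fin m) K)) (hC : ∃ X ∈ C, ∃ X' ∈ C, X ≠ X')
    (hMRD : C.ncard = Fintype.card K ^ (m * (n - rankDistCode C + 1)))
    (t : ℕ) :
    Correcting (discA A) C t ↔ 2 * t + ρ < rankDistCode C := by
  have hq : 1 < Fintype.card K := Fintype.one_lt_card
  set d := rankDistCode C with hd
  have hkn : A.rank ≤ n := by simpa using Matrix.rank_le_card_width A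
  rw [correcting_iff_rank]
  constructor
  · intro h
    by_contra hlt
    push_neg at hlt
    obtain ⟨B, R, hBR⟩ := matrix_exists_factor A (le_refl A.rank)
    have hrk : ∀ X ∈ C, ∀ X' ∈ C, X ≠ X' → 2 * t < (R * X' - R * X).rank := by
      intro X hX X' hX' hne
      have h1 := h X hX X' hX' hne
      have h2 : A * (X' - X) = B * (R * X' - R * X) := by
        conv_lhs => rw [hBR]
        rw [Matrix.mul_assoc, Matrix.mul_sub]
      have h3 : (A * (X' - X)).rank ≤ (R * X' - R * X).rank := by
        rw [h2]; exact Matrix.rank_mul_le_right _ _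
      omega
    set ψ := fun X : Matrix (Fin n) (Fin m) K => R * X with hψ
    have hinj : Set.InjOn ψ C := by
      intro X hX X' hX' he
      by_contra hne
      have h1 := hrk X hX X' hX' hne
      rw [hψ] at he
      simp only at he
      rw [he, sub_self, Matrix.rank_zero] at h1
      omega
    have hbound := matrix_singleton_bound (d' := 2 * t + 1) (by omega) (ψ '' C) ?_
    · rw [Set.ncard_image_of_injOn hinj, hMRD] at hbound
      have hm : 0 < m := by omega
      have hexp : m * (A.rank + 1 - (2 * t + 1)) < m * (n - d + 1) :=
        (Nat.mul_lt_mul_left hm).mpr (by omega)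
      have := pow_lt_pow_right₀ hq hexp
      omega
    · rintro Y ⟨X, hX, rfl⟩ Y' ⟨X', hX', rfl⟩ hne
      have hne' : X ≠ X' := fun hxx => hne (by rw [hxx])
      have := hrk X hX X' hX' hne'
      simp only [hψ]
      omega
  · intro hlt X hX X' hX' hne
    have hrge : d ≤ (X' - X).rank := Nat.sInf_le ⟨X, hX, X', hX', hne, rfl⟩
    have hsyl := matrix_sylvester A (X' - X)
    omega
end

section
/- Let ρ ∈ ℕ with N ≥ n and let 𝒞 ⊆ 𝔽_q^{n×m} be a code with at least two codewords. Then 𝒞 is guaranteed to correct any t packet errors in the noncoherent model (i.e., 𝒞 is t-discrepancy-correcting for Δ_ρ) if and only if δ_ρ(𝒞) > 2t. -/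
open Matrix

set_option maxHeartbeats 1000000

/-- rank of a difference is at most the sum of ranks. -/
lemma myRank_sub_le {K : Type*} [Field K] {N m : ℕ}
    (M P : Matrix (Fin N) (Fin m) K) : (M - P).rank ≤ M.rank + P.rank := by
  classical
  have hle : LinearMap.range (M - P).mulVecLin ≤
      LinearMap.range M.mulVecLin ⊔ LinearMap.range P.mulVecLin := by
    rintro _ ⟨x, rfl⟩
    have : (M - P).mulVecLin x = M.mulVecLin x - P.mulVecLin x := by
      simp [Matrix.mulVecLin_apply, Matrix.sub_mulVec]
    rw [this]
    exact Submodule.sub_mem _ (Submodule.mem_sup_left ⟨x, rfl⟩)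
      (Submodule.mem_sup_right ⟨x, rfl⟩)
  calc (M - P).rank = Module.finrank K ↥(LinearMap.range (M - P).mulVecLin) := rfl
    _ ≤ Module.finrank K ↥(LinearMap.range M.mulVecLin ⊔ LinearMap.range P.mulVecLin) :=
        Submodule.finrank_mono hle
    _ ≤ M.rank + P.rank := Submodule.finrank_add_le_finrank_add_finrank _ _

lemma myRank_neg {K : Type*} [Field K] {N m : ℕ}
    (M : Matrix (Fin N) (Fin m) K) : (-M).rank = M.rank := by
  refine le_antisymm ?_ ?_
  · have := myRank_sub_le (0 : Matrix (Fin N) (Fin m) K) M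
    simpa [Matrix.rank_zero] using this
  · have := myRank_sub_le (0 : Matrix (Fin N) (Fin m) K) (-M)
    simpa [Matrix.rank_zero] using this

/-- A matrix of rank at most `a + b` splits as a sum of matrices of rank `≤ a` and `≤ b`. -/
lemma myRank_split {K : Type*} [Field K] {N m : ℕ} (a b : ℕ)
    (D : Matrix (Fin N) (Fin m) K) (hD : D.rank ≤ a + b) :
    ∃ F G : Matrix (Fin N) (Fin m) K, D = F + G ∧ F.rank ≤ a ∧ G.rank ≤ b := by
  classical
  set f := D.mulVecLin with hf
  set R := LinearMap.range f with hRdef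
  let r := Module.finrank K R
  have hr : r ≤ a + b := hD
  let B := Module.finBasis K ↥R
  let g : Fin r → ((Fin m → K) →ₗ[K] (Fin N → K)) :=
    fun i => ((B.coord i).comp f.rangeRestrict).smulRight ((B i : Fin N → K))
  have hfsum : f = ∑ i, g i := by
    refine LinearMap.ext fun x => ?_
    have h1 : (∑ i, g i) x = ∑ i, (B.repr (f.rangeRestrict x) i) • ((B i : Fin N → K)) := by
      simp [g, LinearMap.sum_apply, LinearMap.smulRight_apply, Module.Basis.coord_apply]
      rfl
    have h2 : (∑ i, (B.repr (f.rangeRestrict x) i) • (B i)) = f.rangeRestrict x :=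
      B.sum_repr _
    have h3 : ((∑ i, (B.repr (f.rangeRestrict x) i) • (B i) : ↥R) : Fin N → K)
        = ∑ i, (B.repr (f.rangeRestrict x) i) • ((B i : Fin N → K)) := by
      push_cast [Submodule.coe_sum]
      rfl
    have := congrArg (Subtype.val) h2
    rw [h3] at this
    rw [LinearMap.sum_apply] at h1 ⊢
    rw [h1, this]
    rfl
  have hrange : ∀ S : Finset (Fin r),
      Module.finrank K ↥(LinearMap.range (∑ i ∈ S, g i)) ≤ S.card := by
    intro S
    set s : Finset (Fin N → K) := S.image fun i => ((B i : Fin N → K)) with hs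
    have hle : LinearMap.range (∑ i ∈ S, g i) ≤ Submodule.span K (s : Set (Fin N → K)) := by
      rintro _ ⟨x, rfl⟩
      rw [LinearMap.sum_apply]
      refine Submodule.sum_mem _ fun i hi => ?_
      have : g i x = ((B.coord i) (f.rangeRestrict x)) • ((B i : Fin N → K)) := rfl
      rw [this]
      exact Submodule.smul_mem _ _ (Submodule.subset_span
        (by exact_mod_cast Finset.mem_image_of_mem _ hi))
    calc Module.finrank K ↥(LinearMap.range (∑ i ∈ S, g i))
        ≤ Module.finrank K ↥(Submodule.span K (s : Set (Fin N → K))) :=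
          Submodule.finrank_mono hle
      _ ≤ s.card := finrank_span_finset_le_card _
      _ ≤ S.card := hs ▸ Finset.card_image_le
  set S : Finset (Fin r) := Finset.univ.filter (fun i => (i : ℕ) < a) with hS
  have hcardS : S.card ≤ a := by
    have : S.card ≤ (Finset.range a).card := by
      refine Finset.card_le_card_of_injOn (fun i => (i : ℕ)) ?_ ?_
      · intro i hi
        simp only [Finset.mem_coe, hS, Finset.mem_filter] at hi
        exact Finset.mem_range.2 hi.2
      · exact fun i _ j _ h => Fin.ext h
    simpa using this
  have hcardSc : Sᶜ.card ≤ b := by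
    have : Sᶜ.card ≤ (Finset.range b).card := by
      refine Finset.card_le_card_of_injOn (fun i => (i : ℕ) - a) ?_ ?_
      · intro i hi
        simp only [Finset.mem_coe, Finset.mem_compl, hS, Finset.mem_filter] at hi
        have h1 : ¬ (i : ℕ) < a := fun h => hi ⟨Finset.mem_univ _, h⟩
        have h2 : (i : ℕ) < r := i.isLt
        have : (i : ℕ) - a < b := by omega
        simpa using this
      · intro i hi j hj h
        rw [Finset.mem_coe, Finset.mem_compl, hS, Finset.mem_filter] at hi hj
        have h1 : ¬ (i : ℕ) < a := fun hh => hi ⟨Finset.mem_univ _, hh⟩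
        have h2 : ¬ (j : ℕ) < a := fun hh => hj ⟨Finset.mem_univ _, hh⟩
        have h' : (i : ℕ) - a = (j : ℕ) - a := h
        exact Fin.ext (by omega)
    simpa using this
  refine ⟨LinearMap.toMatrix' (∑ i ∈ S, g i), LinearMap.toMatrix' (∑ i ∈ Sᶜ, g i), ?_, ?_, ?_⟩
  · have : D = LinearMap.toMatrix' f := by
      rw [hf, ← Matrix.toLin'_apply', LinearMap.toMatrix'_toLin']
    rw [this, ← map_add]
    congr 1
    rw [hfsum, ← Finset.sum_add_sum_compl S]
  · have h1 : (LinearMap.toMatrix' (∑ i ∈ S, g i) : Matrix (Fin N) (Fin m) K).mulVecLin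
        = ∑ i ∈ S, g i := by
      rw [← Matrix.toLin'_apply', Matrix.toLin'_toMatrix']
    rw [Matrix.rank, h1]
    exact (hrange S).trans hcardS
  · have h1 : (LinearMap.toMatrix' (∑ i ∈ Sᶜ, g i) : Matrix (Fin N) (Fin m) K).mulVecLin
        = ∑ i ∈ Sᶜ, g i := by
      rw [← Matrix.toLin'_apply', Matrix.toLin'_toMatrix']
    rw [Matrix.rank, h1]
    exact (hrange Sᶜ).trans hcardSc

lemma myExists_fullrank {K : Type*} [Field K] {n N : ℕ} (hnN : n ≤ N) :
    ∃ A : Matrix (Fin N) (Fin n) K, n ≤ A.rank := by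
  classical
  set A : Matrix (Fin N) (Fin n) K :=
    Matrix.of (fun i j => if (i : ℕ) = (j : ℕ) then 1 else 0) with hA
  have hmul : Aᵀ * A = (1 : Matrix (Fin n) (Fin n) K) := by
    ext j k
    rw [Matrix.mul_apply]
    rw [Finset.sum_eq_single (Fin.castLE hnN j)]
    · by_cases hjk : j = k
      · subst hjk
        simp [hA, Matrix.one_apply]
      · have : ¬ ((j : ℕ) = (k : ℕ)) := fun h => hjk (Fin.ext h)
        simp [hA, Matrix.one_apply, hjk, this]
    · intro i _ hi
      have : ¬ ((i : ℕ) = (j : ℕ)) := by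
        intro h
        exact hi (Fin.ext (by simpa using h))
      simp [hA, this]
    · intro h
      exact absurd (Finset.mem_univ _) h
  refine ⟨A, ?_⟩
  have h1 : (Aᵀ * A).rank = n := by
    rw [hmul, Matrix.rank_one, Fintype.card_fin]
  have h2 : (Aᵀ * A).rank ≤ A.rank := Matrix.rank_mul_le_right _ _
  omega
noncomputable def discRho {K : Type*} [Field K] [Fintype K] {n m N : ℕ}
    (ρ : ℕ) (X : Matrix (Fin n) (Fin m) K) (Y : Matrix (Fin N) (Fin m) K) : ℕ :=
  sInf {r : ℕ | ∃ A : Matrix (Fin N) (Fin n) K, n - ρ ≤ A.rank ∧ r = (Y - A * X).rank}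

/-- The Δ-distance `δ_ρ(X,X') = min_Y (Δ_ρ(X,Y) + Δ_ρ(X',Y))`. -/
noncomputable def deltaRho {K : Type*} [Field K] [Fintype K] {n m N : ℕ}
    (ρ : ℕ) (X X' : Matrix (Fin n) (Fin m) K) : ℕ :=
  sInf {e : ℕ | ∃ Y : Matrix (Fin N) (Fin m) K, e = discRho ρ X Y + discRho ρ X' Y}

/-- `δ_ρ(𝒞)`: the minimum Δ-distance over pairs of distinct codewords. -/
noncomputable def deltaRhoCode {K : Type*} [Field K] [Fintype K] {n m N : ℕ}
    (ρ : ℕ) (C : Set (Matrix (Fin n) (Fin m) K)) : ℕ :=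
  sInf {e : ℕ | ∃ X ∈ C, ∃ X' ∈ C, X ≠ X' ∧ e = deltaRho (N := N) ρ X X'}

/-- A code with at least two codewords corrects any `t` packet errors in the
noncoherent model (is `t`-discrepancy-correcting for `Δ_ρ`) if and only if
`δ_ρ(𝒞) > 2t`. -/
theorem correcting_iff_deltaRhoCode {K : Type*} [Field K] [Fintype K] {n m N : ℕ}
    (hn : 0 < n) (hm : 0 < m) (hN : 0 < N) (hnN : n ≤ N) (ρ : ℕ)
    (C : Set (Matrix (Fin n) (Fin m) K)) (hC : ∃ X ∈ C, ∃ X' ∈ C, X ≠ X')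
    (t : ℕ) :
    Correcting (fun X (Y : Matrix (Fin N) (Fin m) K) => discRho ρ X Y) C t ↔
      2 * t < deltaRhoCode (N := N) ρ C := by
  classical
  obtain ⟨A0, hA0⟩ := myExists_fullrank (K := K) hnN
  have hdne : ∀ (X : Matrix (Fin n) (Fin m) K) (Y : Matrix (Fin N) (Fin m) K),
      {r : ℕ | ∃ A : Matrix (Fin N) (Fin n) K,
        n - ρ ≤ A.rank ∧ r = (Y - A * X).rank}.Nonempty :=
    fun X Y => ⟨_, A0, le_trans (Nat.sub_le _ _) hA0, rfl⟩
  have hdisc_le : ∀ (X : Matrix (Fin n) (Fin m) K) (Y : Matrix (Fin N) (Fin m) K)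
      (A : Matrix (Fin N) (Fin n) K), n - ρ ≤ A.rank →
      discRho ρ X Y ≤ (Y - A * X).rank :=
    fun X Y A hA => Nat.sInf_le ⟨A, hA, rfl⟩
  have hdisc_mem : ∀ (X : Matrix (Fin n) (Fin m) K) (Y : Matrix (Fin N) (Fin m) K),
      ∃ A : Matrix (Fin N) (Fin n) K, n - ρ ≤ A.rank ∧
      discRho ρ X Y = (Y - A * X).rank := fun X Y => Nat.sInf_mem (hdne X Y)
  constructor
  · intro hcorr
    have hkey : ∀ X ∈ C, ∀ X' ∈ C, X ≠ X' → 2 * t < deltaRho (N := N) ρ X X' := by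
      intro X hX X' hX' hne
      by_contra hle'
      have hle : deltaRho (N := N) ρ X X' ≤ 2 * t := Nat.not_lt.1 hle'
      have hne2 : {e : ℕ | ∃ Y : Matrix (Fin N) (Fin m) K,
          e = discRho ρ X Y + discRho ρ X' Y}.Nonempty := ⟨_, 0, rfl⟩
      obtain ⟨Y, hY⟩ := Nat.sInf_mem hne2
      have hY' : deltaRho (N := N) ρ X X' = discRho ρ X Y + discRho ρ X' Y := hY
      obtain ⟨A, hAr, hAe⟩ := hdisc_mem X Y
      obtain ⟨A', hA'r, hA'e⟩ := hdisc_mem X' Y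
      have hsum : (Y - A * X).rank + (Y - A' * X').rank ≤ t + t := by omega
      set D : Matrix (Fin N) (Fin m) K := A' * X' - A * X with hD
      have hDeq : D = (Y - A * X) - (Y - A' * X') := by rw [hD]; abel
      have hDrank : D.rank ≤ t + t := by
        rw [hDeq]
        exact le_trans (myRank_sub_le _ _) hsum
      obtain ⟨F, G, hFG, hF, hG⟩ := myRank_split t t D hDrank
      have hG' : G = A' * X' - A * X - F := by rw [← hD, hFG]; abel
      have h1 : discRho ρ X (A * X + F) ≤ t := by
        have h := hdisc_le X (A * X + F) A hAr
        have he : (A * X + F) - A * X = F := by abel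
        rw [he] at h
        exact h.trans hF
      have h2 : discRho ρ X' (A * X + F) ≤ t := by
        have h := hdisc_le X' (A * X + F) A' hA'r
        have he : (A * X + F) - A' * X' = -G := by rw [hG']; abel
        rw [he, myRank_neg] at h
        exact h.trans hG
      exact hcorr X hX X' hX' hne (A * X + F) ⟨h1, h2⟩
    have hne3 : {e : ℕ | ∃ X ∈ C, ∃ X' ∈ C, X ≠ X' ∧
        e = deltaRho (N := N) ρ X X'}.Nonempty := by
      obtain ⟨X, hX, X', hX', hne⟩ := hC
      exact ⟨_, X, hX, X', hX', hne, rfl⟩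
    obtain ⟨X, hX, X', hX', hne, heq⟩ := Nat.sInf_mem hne3
    have hcd : deltaRhoCode (N := N) ρ C = deltaRho (N := N) ρ X X' := heq
    rw [hcd]
    exact hkey X hX X' hX' hne
  · rintro hlt X hX X' hX' hne Y ⟨h1, h2⟩
    have h1' : discRho ρ X Y ≤ t := h1
    have h2' : discRho ρ X' Y ≤ t := h2
    have hd : deltaRho (N := N) ρ X X' ≤ discRho ρ X Y + discRho ρ X' Y :=
      Nat.sInf_le ⟨Y, rfl⟩
    have hcode : deltaRhoCode (N := N) ρ C ≤ deltaRho (N := N) ρ X X' :=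
      Nat.sInf_le ⟨X, hX, X', hX', hne, rfl⟩
    omega
end

section
/- Let ρ ∈ ℕ with N ≥ n − ρ. Then for all X, X' ∈ 𝔽_q^{n×m}, the Δ-distance induced by the noncoherent discrepancy satisfies δ_ρ(X,X') = [d_I(⟨X⟩, ⟨X'⟩) − ρ]⁺. -/
/-- The row space of a matrix: the span of its rows in `𝔽_q^m`. -/
noncomputable def rowSpace {K : Type*} [Field K] {a b : ℕ}
    (X : Matrix (Fin a) (Fin b) K) : Submodule K (Fin b → K) :=
  Submodule.span K (Set.range fun i => X i)

/-- The injection distance between two subspaces of `𝔽_q^m`: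
`d_I(U,V) = max {dim U, dim V} − dim (U ∩ V)`. -/
noncomputable def injDist {K : Type*} [Field K] {m : ℕ}
    (U V : Submodule K (Fin m → K)) : ℕ :=
  max (Module.finrank K U) (Module.finrank K V) - Module.finrank K ↥(U ⊓ V)

set_option linter.unusedSectionVars false
set_option linter.unusedVariables false



open Submodule Module Matrix

section helpers
variable {K : Type*} [Field K] {n m N a b : ℕ}

lemma rowSpace_eq_range (X : Matrix (Fin a) (Fin b) K) :
    rowSpace X = LinearMap.range X.vecMulLinear := (range_vecMulLinear X).symm

lemma rank_eq_finrank_rowSpace (X : Matrix (Fin a) (Fin b) K) :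
    X.rank = finrank K (rowSpace X) := Matrix.rank_eq_finrank_span_row X

lemma mem_rowSpace (X : Matrix (Fin a) (Fin b) K) (i : Fin a) : X i ∈ rowSpace X :=
  subset_span ⟨i, rfl⟩

lemma mul_apply_row (A : Matrix (Fin N) (Fin n) K) (X : Matrix (Fin n) (Fin m) K) (i : Fin N) :
    (A * X) i = X.vecMulLinear (A i) := by
  funext j
  simp [Matrix.mul_apply, Matrix.vecMulLinear_apply, Matrix.vecMul, dotProduct]

lemma rowSpace_mul (A : Matrix (Fin N) (Fin n) K) (X : Matrix (Fin n) (Fin m) K) :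
    rowSpace (A * X) = (rowSpace A).map X.vecMulLinear := by
  unfold rowSpace
  rw [Submodule.map_span]
  congr 1
  rw [← Set.range_comp]
  exact congrArg _ (funext fun i => (mul_apply_row A X i))

lemma rowSpace_mul_le (A : Matrix (Fin N) (Fin n) K) (X : Matrix (Fin n) (Fin m) K) :
    rowSpace (A * X) ≤ rowSpace X := by
  rw [rowSpace_mul, rowSpace_eq_range X]
  exact Submodule.map_le_iff_le_comap.mpr fun x _ => LinearMap.mem_range_self _ _

lemma rowSpace_le_sup_sub (P Q : Matrix (Fin a) (Fin b) K) :
    rowSpace P ≤ rowSpace Q ⊔ rowSpace (P - Q) := by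
  refine span_le.2 ?_
  rintro x ⟨i, rfl⟩
  show P i ∈ (rowSpace Q ⊔ rowSpace (P - Q) : Submodule K (Fin b → K))
  have h : P i = Q i + (P - Q) i := by
    funext j; simp
  rw [h]
  exact add_mem (mem_sup_left (mem_rowSpace Q i)) (mem_sup_right (mem_rowSpace (P - Q) i))

lemma rowSpace_sub_comm (P Q : Matrix (Fin a) (Fin b) K) :
    rowSpace (P - Q) = rowSpace (Q - P) := by
  have h : ∀ (P Q : Matrix (Fin a) (Fin b) K), rowSpace (P - Q) ≤ rowSpace (Q - P) := by
    intro P Q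
    refine span_le.2 ?_
    rintro x ⟨i, rfl⟩
    show (P - Q) i ∈ (rowSpace (Q - P) : Submodule K (Fin b → K))
    have h2 : (P - Q) i = (-1 : K) • (Q - P) i := by
      funext j; simp
    rw [h2]
    exact smul_mem _ _ (mem_rowSpace (Q - P) i)
  exact le_antisymm (h P Q) (h Q P)
end helpers


section helpers2
variable {K : Type*} [Field K] {V W : Type*} [AddCommGroup V] [Module K V]
  [AddCommGroup W] [Module K W] [FiniteDimensional K V]

lemma finrank_le_map_add_ker (φ : V →ₗ[K] W) (p : Submodule K V) :
    finrank K p ≤ finrank K (p.map φ) + finrank K (LinearMap.ker φ) := by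
  have h1 := LinearMap.finrank_range_add_finrank_ker (φ.domRestrict p)
  have h2 : LinearMap.range (φ.domRestrict p) = p.map φ := LinearMap.range_domRestrict p φ
  have hker : LinearMap.ker (φ.domRestrict p) = comap p.subtype (LinearMap.ker φ ⊓ p) := by
    ext x
    simp [LinearMap.mem_ker, x.2]
  have h3 : finrank K (LinearMap.ker (φ.domRestrict p)) ≤ finrank K (LinearMap.ker φ) := by
    rw [hker,
      LinearEquiv.finrank_eq (comapSubtypeEquivOfLe (inf_le_right : LinearMap.ker φ ⊓ p ≤ p))]
    exact Submodule.finrank_mono inf_le_left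
  rw [h2] at h1
  omega

end helpers2


section helpers2
variable {K : Type*} [Field K] {V W : Type*} [AddCommGroup V] [Module K V]
  [AddCommGroup W] [Module K W] [FiniteDimensional K V] [FiniteDimensional K W]

lemma finrank_le_of_le_sup {S V' F : Submodule K W} (h : S ≤ V' ⊔ F) :
    finrank K S ≤ finrank K ↥(S ⊓ V') + finrank K F := by
  have h1 := Submodule.finrank_sup_add_finrank_inf_eq S V'
  have h2 : finrank K ↥(S ⊔ V') ≤ finrank K ↥(V' ⊔ F) :=
    Submodule.finrank_mono (sup_le h le_sup_left)
  have h3 := Submodule.finrank_sup_add_finrank_inf_eq V' F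
  have h4 : finrank K ↥(V' ⊔ F) ≤ finrank K V' + finrank K F := by omega
  omega

end helpers2

section helpers3
variable {K : Type*} [Field K] {n m N a b : ℕ}

lemma subfamily_le_rank (M : Matrix (Fin a) (Fin b) K) {ι : Type*} [Fintype ι]
    (f : ι → Fin a) (h : LinearIndependent K (fun j => M (f j))) :
    Fintype.card ι ≤ M.rank := by
  rw [Matrix.rank_eq_finrank_span_row]
  rw [← finrank_span_eq_card h]
  apply Submodule.finrank_mono
  apply span_mono
  rintro x ⟨j, rfl⟩
  exact ⟨f j, rfl⟩

lemma rank_mul_sylvester (A : Matrix (Fin N) (Fin n) K) (X : Matrix (Fin n) (Fin m) K) :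
    X.rank + A.rank ≤ n + (A * X).rank := by
  have h1 := finrank_le_map_add_ker X.vecMulLinear (Submodule.span K (Set.range fun i => A i))
  have h2 : (Submodule.span K (Set.range fun i => A i)).map X.vecMulLinear
      = Submodule.span K (Set.range fun i => (A * X) i) := by
    have := rowSpace_mul A X
    unfold rowSpace at this
    exact this.symm
  have h3 := LinearMap.finrank_range_add_finrank_ker X.vecMulLinear
  have h4 : LinearMap.range X.vecMulLinear = Submodule.span K (Set.range fun i => X i) := by
    have := rowSpace_eq_range X
    unfold rowSpace at this
    exact this.symm
  have h5 : finrank K (Fin n → K) = n := by simp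
  rw [h2] at h1
  rw [h4, h5] at h3
  have e1 : X.rank = finrank K (Submodule.span K (Set.range fun i => X i)) :=
    rank_eq_finrank_rowSpace X
  have e2 : A.rank = finrank K (Submodule.span K (Set.range fun i => A i)) :=
    rank_eq_finrank_rowSpace A
  have e3 : (A * X).rank = finrank K (Submodule.span K (Set.range fun i => (A * X) i)) :=
    rank_eq_finrank_rowSpace (A * X)
  omega

end helpers3

section helpers4
variable {K : Type*} [Field K] {n m N : ℕ}

lemma exists_A (X : Matrix (Fin n) (Fin m) K) {s : ℕ} (hsN : s ≤ N)
    (y : Fin s → (Fin m → K)) (hy : LinearIndependent K y) (hyU : ∀ i, y i ∈ rowSpace X) :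
    ∃ A : Matrix (Fin N) (Fin n) K,
      (∀ i : Fin N, (A * X) i = if h : (i : ℕ) < s then y ⟨i, h⟩ else 0) ∧
      min N (s + (n - X.rank)) ≤ A.rank := by
  classical
  set φ := X.vecMulLinear with hφ
  have hrange : ∀ i, ∃ cc : Fin n → K, φ cc = y i := by
    intro i
    have h := hyU i
    rw [rowSpace_eq_range] at h
    exact h
  choose c hc using hrange
  set κ := LinearMap.ker φ with hκ
  set t := finrank K κ with ht
  have htn : X.rank + t = n := by
    have h3 := LinearMap.finrank_range_add_finrank_ker φ
    have h4 : finrank K (LinearMap.range φ) = X.rank := by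
      rw [rank_eq_finrank_rowSpace X, rowSpace_eq_range X]
    have h5 : finrank K (Fin n → K) = n := by simp
    have h6 : t = finrank K (LinearMap.ker φ) := rfl
    omega
  set ℓ : Fin t → (Fin n → K) := fun j => ((Module.finBasis K κ) j : Fin n → K) with hℓ
  have hℓκ : ∀ j, ℓ j ∈ κ := fun j => ((Module.finBasis K κ) j).2
  have hℓli : LinearIndependent K ℓ :=
    (Module.finBasis K κ).linearIndependent.map' κ.subtype (Submodule.ker_subtype κ)
  set A : Matrix (Fin N) (Fin n) K := Matrix.of (fun i =>
    if h : (i : ℕ) < s then c ⟨i, h⟩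
    else if h2 : (i : ℕ) - s < t then ℓ ⟨(i : ℕ) - s, h2⟩ else 0) with hA
  have hAapp : ∀ i : Fin N, A i =
      if h : (i : ℕ) < s then c ⟨i, h⟩
      else if h2 : (i : ℕ) - s < t then ℓ ⟨(i : ℕ) - s, h2⟩ else 0 := fun i => rfl
  refine ⟨A, ?_, ?_⟩
  · intro i
    rw [mul_apply_row, hAapp i]
    by_cases h : (i : ℕ) < s
    · rw [dif_pos h, dif_pos h]
      exact hc ⟨i, h⟩
    · rw [dif_neg h, dif_neg h]
      by_cases h2 : (i : ℕ) - s < t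
      · rw [dif_pos h2]
        exact LinearMap.mem_ker.mp (hℓκ _)
      · rw [dif_neg h2]
        exact map_zero φ
  · set t' := min (N - s) t with ht'
    set F : Fin s ⊕ Fin t' → Fin N := Sum.elim
      (fun i => ⟨i, lt_of_lt_of_le i.2 hsN⟩)
      (fun j => ⟨s + j, by
        have hj : (j : ℕ) < N - s := lt_of_lt_of_le j.2 (min_le_left _ _)
        omega⟩) with hF
    set ℓ' : Fin t' → (Fin n → K) :=
      fun j => ℓ ⟨j, lt_of_lt_of_le j.2 (min_le_right _ _)⟩ with hℓ'
    have hrows : (fun z => A (F z)) = Sum.elim c ℓ' := by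
      funext z
      cases z with
      | inl i =>
        simp only [hF, Sum.elim_inl, hAapp]
        rw [dif_pos (show ((⟨(i : ℕ), lt_of_lt_of_le i.2 hsN⟩ : Fin N) : ℕ) < s from i.2)]
      | inr j =>
        simp only [hF, Sum.elim_inr, hAapp]
        have hns : ¬ ((s + (j : ℕ)) < s) := by omega
        rw [dif_neg hns]
        have h2 : (s + (j : ℕ)) - s < t := by
          have hj : (j : ℕ) < t := lt_of_lt_of_le j.2 (min_le_right _ _)
          omega
        rw [dif_pos h2]
        simp only [hℓ']
        exact congrArg ℓ (Fin.ext (by simp))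
    have hcli : LinearIndependent K c := by
      have hcomp : φ ∘ c = y := funext hc
      exact LinearIndependent.of_comp φ (by rw [hcomp]; exact hy)
    have hℓ'li : LinearIndependent K ℓ' := by
      apply hℓli.comp
      intro a b hab
      have h2 : ((⟨(a : ℕ), lt_of_lt_of_le a.2 (min_le_right _ _)⟩ : Fin t)) =
          ⟨(b : ℕ), lt_of_lt_of_le b.2 (min_le_right _ _)⟩ := hab
      rw [Fin.mk.injEq] at h2
      exact Fin.ext h2
    have hdisj : Disjoint (Submodule.span K (Set.range c)) (Submodule.span K (Set.range ℓ')) := by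
      have hsub : Submodule.span K (Set.range ℓ') ≤ κ := by
        rw [Submodule.span_le]
        rintro x ⟨j, rfl⟩
        exact hℓκ _
      have hdisj2 : Disjoint (Submodule.span K (Set.range c)) κ := by
        rw [Submodule.disjoint_def]
        intro x hx hxκ
        obtain ⟨coef, hcoef⟩ := (mem_span_range_iff_exists_fun K).mp hx
        have hphix : φ x = 0 := hxκ
        have hsum : ∑ i, coef i • y i = 0 := by
          rw [← hcoef] at hphix
          rw [map_sum] at hphix
          simpa only [_root_.map_smul, hc] using hphix
        have hz := Fintype.linearIndependent_iff.mp hy coef hsum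
        rw [← hcoef]
        simp [hz]
      exact hdisj2.mono_right hsub
    have hli : LinearIndependent K (fun z => A (F z)) := by
      rw [hrows]
      exact hcli.sum_type hℓ'li hdisj
    have hcard := subfamily_le_rank A F hli
    simp only [Fintype.card_sum, Fintype.card_fin] at hcard
    omega

end helpers4

set_option synthInstance.maxHeartbeats 1000000
set_option maxHeartbeats 2000000
section helpers5
variable {K : Type*} [Field K] {m : ℕ}

lemma exists_extend {U : Submodule K (Fin m → K)} {d : ℕ} (g : Fin d → (Fin m → K))
    (hg : LinearIndependent K g) (hgU : ∀ i, g i ∈ U) :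
    ∃ e : Fin (finrank K U) → (Fin m → K), LinearIndependent K e ∧ (∀ i, e i ∈ U) ∧
      ∀ (i : ℕ) (h1 : i < d) (h2 : i < finrank K U), e ⟨i, h2⟩ = g ⟨i, h1⟩ := by
  classical
  set g' : Fin d → ↥U := fun i => ⟨g i, hgU i⟩ with hg'
  have hcomp : U.subtype ∘ g' = g := rfl
  have hg'li : LinearIndependent K g' :=
    LinearIndependent.of_comp U.subtype (by rw [hcomp]; exact hg)
  set S := Submodule.span K (Set.range g') with hS
  obtain ⟨q, hq⟩ := Submodule.exists_isCompl S
  set fq := finrank K ↥q with hfq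
  have hdq : d + fq = finrank K U := by
    have h1 := Submodule.finrank_add_eq_of_isCompl hq
    have h2 : finrank K ↥S = d := by
      rw [hS, finrank_span_eq_card hg'li, Fintype.card_fin]
    omega
  letI : Module.Free K ↥q := Module.Free.of_divisionRing K ↥q
  set cb := Module.finBasis K ↥q with hcb
  set h : Fin d ⊕ Fin fq → ↥U := Sum.elim g' (fun j => ((cb j : ↥q) : ↥U)) with hh
  have hhli : LinearIndependent K h := by
    apply hg'li.sum_type
    · exact cb.linearIndependent.map_injOn q.subtype Subtype.val_injective.injOn
    · have h1 : Submodule.span K (Set.range fun j => ((cb j : ↥q) : ↥U)) = q := by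
        rw [show (fun j => ((cb j : ↥q) : ↥U)) = (q.subtype ∘ cb) from rfl, Set.range_comp,
          Submodule.span_image, cb.span_eq, Submodule.map_top, Submodule.range_subtype]
      rw [h1]
      exact hq.disjoint
  set σ : Fin (finrank K U) → Fin d ⊕ Fin fq :=
    fun i => finSumFinEquiv.symm (Fin.cast hdq.symm i) with hσdef
  have hσinj : Function.Injective σ :=
    finSumFinEquiv.symm.injective.comp (Fin.cast_injective hdq.symm)
  refine ⟨fun i => ↑(h (σ i)), ?_, ?_, ?_⟩
  · have hli2 : LinearIndependent K (fun i => h (σ i)) := hhli.comp σ hσinj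
    exact hli2.map' U.subtype (Submodule.ker_subtype U)
  · intro i
    exact (h (σ i)).2
  · intro i h1 h2
    have hcast : Fin.cast hdq.symm ⟨i, h2⟩ = Fin.castAdd fq ⟨i, h1⟩ := by
      apply Fin.ext
      rfl
    have hσ : σ ⟨i, h2⟩ = Sum.inl ⟨i, h1⟩ := by
      show finSumFinEquiv.symm (Fin.cast hdq.symm ⟨i, h2⟩) = Sum.inl ⟨i, h1⟩
      rw [hcast, finSumFinEquiv_symm_apply_castAdd]
    show ((h (σ ⟨i, h2⟩) : ↥U) : Fin m → K) = g ⟨i, h1⟩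
    rw [hσ]
    rfl

end helpers5

section lower
variable {K : Type*} [Field K] {n m N : ℕ}

lemma half_bound (ρ : ℕ) (X X' : Matrix (Fin n) (Fin m) K)
    (Y : Matrix (Fin N) (Fin m) K) (A A' : Matrix (Fin N) (Fin n) K)
    (hA : n - ρ ≤ A.rank) :
    finrank K (rowSpace X) ≤ finrank K ↥(rowSpace X ⊓ rowSpace X')
      + (Y - A * X).rank + (Y - A' * X').rank + ρ := by
  set U := rowSpace X with hU
  set V := rowSpace X' with hV
  set S := rowSpace (A * X) with hS
  set E := rowSpace (Y - A * X) with hE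
  set E' := rowSpace (Y - A' * X') with hE'
  have hSU : S ≤ U := rowSpace_mul_le A X
  have hranks : X.rank + A.rank ≤ n + (A * X).rank := rank_mul_sylvester A X
  have hXn : X.rank ≤ n := Matrix.rank_le_height X
  have e1 : X.rank = finrank K U := rank_eq_finrank_rowSpace X
  have e2 : (A * X).rank = finrank K S := rank_eq_finrank_rowSpace (A * X)
  have e3 : (Y - A * X).rank = finrank K E := rank_eq_finrank_rowSpace (Y - A * X)
  have e4 : (Y - A' * X').rank = finrank K E' := rank_eq_finrank_rowSpace (Y - A' * X')
  have hUS : finrank K U ≤ finrank K S + ρ := by omega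
  have hWE : rowSpace Y ≤ V ⊔ E' := by
    have h1 : rowSpace Y ≤ rowSpace (A' * X') ⊔ E' := rowSpace_le_sup_sub Y (A' * X')
    exact le_trans h1 (sup_le_sup_right (rowSpace_mul_le A' X') E')
  have hSWE : S ≤ rowSpace Y ⊔ E := by
    have h1 : S ≤ rowSpace Y ⊔ rowSpace (A * X - Y) := rowSpace_le_sup_sub (A * X) Y
    rwa [rowSpace_sub_comm (A * X) Y] at h1
  have hSVF : S ≤ V ⊔ (E' ⊔ E) := by
    refine le_trans hSWE (sup_le ?_ ?_)
    · exact le_trans hWE (sup_le_sup le_rfl le_sup_left)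
    · exact le_trans le_sup_right le_sup_right
  have hL3 := finrank_le_of_le_sup hSVF
  have h6 : finrank K ↥(S ⊓ V) ≤ finrank K ↥(U ⊓ V) :=
    Submodule.finrank_mono (inf_le_inf hSU le_rfl)
  have h7 : finrank K ↥(E' ⊔ E) ≤ finrank K E' + finrank K E := by
    have := Submodule.finrank_sup_add_finrank_inf_eq E' E
    omega
  omega

lemma lower_bound_elem (ρ : ℕ) (X X' : Matrix (Fin n) (Fin m) K)
    (Y : Matrix (Fin N) (Fin m) K) (A A' : Matrix (Fin N) (Fin n) K)
    (hA : n - ρ ≤ A.rank) (hA' : n - ρ ≤ A'.rank) :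
    injDist (rowSpace X) (rowSpace X') ≤ (Y - A * X).rank + (Y - A' * X').rank + ρ := by
  have h1 := half_bound ρ X X' Y A A' hA
  have h2 := half_bound ρ X' X Y A' A hA'
  have h3 : rowSpace X' ⊓ rowSpace X = rowSpace X ⊓ rowSpace X' := inf_comm _ _
  rw [h3] at h2
  unfold injDist
  omega

lemma exists_bigrank (ρ : ℕ) (hNρ : n - ρ ≤ N) :
    ∃ A : Matrix (Fin N) (Fin n) K, n - ρ ≤ A.rank := by
  classical
  set k := min n N with hk
  set A : Matrix (Fin N) (Fin n) K :=
    Matrix.of (fun i j => if (i : ℕ) = (j : ℕ) then 1 else 0) with hA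
  refine ⟨A, ?_⟩
  have hrows : (fun l : Fin k => A ⟨l, lt_of_lt_of_le l.2 (min_le_right _ _)⟩)
      = fun l : Fin k => Pi.single (⟨l, lt_of_lt_of_le l.2 (min_le_left _ _)⟩ : Fin n) (1 : K) := by
    funext l j
    show (if ((l : ℕ) = (j : ℕ)) then (1 : K) else 0) = _
    by_cases hlj : (l : ℕ) = (j : ℕ) <;>
      simp [Pi.single_apply, Fin.ext_iff, hlj, eq_comm]
  have hli : LinearIndependent K
      (fun l : Fin k => A ⟨l, lt_of_lt_of_le l.2 (min_le_right _ _)⟩) := by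
    rw [hrows]
    have hbli := (Pi.basisFun K (Fin n)).linearIndependent
    have hinj : Function.Injective
        (fun l : Fin k => (⟨l, lt_of_lt_of_le l.2 (min_le_left _ _)⟩ : Fin n)) := by
      intro a b hab
      have h2 : (⟨(a : ℕ), lt_of_lt_of_le a.2 (min_le_left _ _)⟩ : Fin n) =
          ⟨(b : ℕ), lt_of_lt_of_le b.2 (min_le_left _ _)⟩ := hab
      rw [Fin.mk.injEq] at h2
      exact Fin.ext h2
    have := hbli.comp
      (fun l : Fin k => (⟨l, lt_of_lt_of_le l.2 (min_le_left _ _)⟩ : Fin n)) hinj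
    simpa only [Function.comp_def, Pi.basisFun_apply] using this
  have hsub := subfamily_le_rank A
    (fun l : Fin k => (⟨l, lt_of_lt_of_le l.2 (min_le_right _ _)⟩ : Fin N)) hli
  simp only [Fintype.card_fin] at hsub
  omega

end lower

section upper
variable {K : Type*} [Field K] [Fintype K] {n m N : ℕ}

lemma upper_le (ρ : ℕ) (hNρ : n - ρ ≤ N)
    (X X' : Matrix (Fin n) (Fin m) K) (hvu : X'.rank ≤ X.rank) :
    deltaRho (N := N) ρ X X' ≤ injDist (rowSpace X) (rowSpace X') - ρ := by
  classical
  set U := rowSpace X with hU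
  set V := rowSpace X' with hV
  have hXu : X.rank = finrank K U := rank_eq_finrank_rowSpace X
  have hXv : X'.rank = finrank K V := rank_eq_finrank_rowSpace X'
  set u := finrank K U with hu
  set v := finrank K V with hv
  set d := finrank K ↥(U ⊓ V) with hd
  have hun : u ≤ n := by have := Matrix.rank_le_height X; omega
  have hvn : v ≤ n := by have := Matrix.rank_le_height X'; omega
  have hvu' : v ≤ u := by omega
  have hdu : d ≤ u := Submodule.finrank_mono inf_le_left
  have hdv : d ≤ v := Submodule.finrank_mono inf_le_right
  set s := u - ρ with hs
  set p := min d s with hp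
  set w := max p (v - ρ) with hw
  have hsN : s ≤ N := by omega
  have hwN : w ≤ N := by omega
  have hws : w ≤ s := by omega
  have hwv : w ≤ v := by omega
  have hsu : s ≤ u := by omega
  have hpd : p ≤ d := by omega
  -- adapted families
  letI : Module.Free K ↥(U ⊓ V) := Module.Free.of_divisionRing K ↥(U ⊓ V)
  set gv : Fin d → (Fin m → K) :=
    fun i => ((Module.finBasis K ↥(U ⊓ V)) i : Fin m → K) with hgv
  have hgvli : LinearIndependent K gv :=
    (Module.finBasis K ↥(U ⊓ V)).linearIndependent.map' (U ⊓ V).subtype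
      (Submodule.ker_subtype _)
  have hgvU : ∀ i, gv i ∈ U := fun i => ((Module.finBasis K ↥(U ⊓ V)) i).2.1
  have hgvV : ∀ i, gv i ∈ V := fun i => ((Module.finBasis K ↥(U ⊓ V)) i).2.2
  obtain ⟨e, heli, heU, hee⟩ := exists_extend gv hgvli hgvU
  obtain ⟨f, hfli, hfV, hff⟩ := exists_extend gv hgvli hgvV
  -- the Z rows family
  set zy : Fin s → (Fin m → K) := fun i => e ⟨i, lt_of_lt_of_le i.2 hsu⟩ with hzy
  have hzyli : LinearIndependent K zy := by
    apply heli.comp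
    intro a b hab
    have h2 : (⟨(a : ℕ), lt_of_lt_of_le a.2 hsu⟩ : Fin u) =
        ⟨(b : ℕ), lt_of_lt_of_le b.2 hsu⟩ := hab
    rw [Fin.mk.injEq] at h2
    exact Fin.ext h2
  have hzyU : ∀ i, zy i ∈ rowSpace X := fun i => heU _
  obtain ⟨A, hArows, hArank⟩ := exists_A X hsN zy hzyli hzyU
  have hArank' : n - ρ ≤ A.rank := by
    rw [← hXu] at *
    omega
  -- the Y rows family
  set yfam : Fin w → (Fin m → K) := fun i => f ⟨i, lt_of_lt_of_le i.2 hwv⟩ with hyfam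
  have hyli : LinearIndependent K yfam := by
    apply hfli.comp
    intro a b hab
    have h2 : (⟨(a : ℕ), lt_of_lt_of_le a.2 hwv⟩ : Fin v) =
        ⟨(b : ℕ), lt_of_lt_of_le b.2 hwv⟩ := hab
    rw [Fin.mk.injEq] at h2
    exact Fin.ext h2
  have hyV : ∀ i, yfam i ∈ rowSpace X' := fun i => hfV _
  obtain ⟨A', hA'rows, hA'rank⟩ := exists_A X' hwN yfam hyli hyV
  have hA'rank' : n - ρ ≤ A'.rank := by
    rw [← hXv] at *
    omega
  set Y : Matrix (Fin N) (Fin m) K :=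
    Matrix.of (fun i => if h : (i : ℕ) < w then yfam ⟨i, h⟩ else 0) with hY
  have hYrow : ∀ i : Fin N, Y i = if h : (i : ℕ) < w then yfam ⟨i, h⟩ else 0 := fun i => rfl
  -- second discrepancy is zero
  have hzero : Y - A' * X' = 0 := by
    funext i j
    have hrow : (Y - A' * X') i = Y i - (A' * X') i := rfl
    have : (Y - A' * X') i = 0 := by
      rw [hrow, hA'rows i, hYrow i, sub_self]
    rw [this]
    rfl
  have hdisc2 : discRho ρ X' Y = 0 := by
    have hle : discRho ρ X' Y ≤ 0 := by
      apply Nat.sInf_le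
      exact ⟨A', hA'rank', by rw [hzero, Matrix.rank_zero]⟩
    omega
  -- first discrepancy
  have hDrow : ∀ i : Fin N, (Y - A * X) i =
      (if h : (i : ℕ) < w then yfam ⟨i, h⟩ else 0) -
      (if h : (i : ℕ) < s then zy ⟨i, h⟩ else 0) := by
    intro i
    have hrow : (Y - A * X) i = Y i - (A * X) i := rfl
    rw [hrow, hArows i, hYrow i]
  set g2 : Fin (s - p) → (Fin m → K) :=
    fun j => (Y - A * X) ⟨p + j, by have := j.2; omega⟩ with hg2
  have hmem : ∀ i : Fin N, (Y - A * X) i ∈ Submodule.span K (Set.range g2) := by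
    intro i
    by_cases h1 : (i : ℕ) < p
    · have hiw : (i : ℕ) < w := by omega
      have his : (i : ℕ) < s := by omega
      have hid : (i : ℕ) < d := by omega
      have hiu : (i : ℕ) < u := by omega
      have hiv : (i : ℕ) < v := by omega
      have hrow0 : (Y - A * X) i = 0 := by
        rw [hDrow i, dif_pos hiw, dif_pos his]
        show f ⟨(i : ℕ), hiv⟩ - e ⟨(i : ℕ), hiu⟩ = 0
        rw [hee (i : ℕ) hid hiu, hff (i : ℕ) hid hiv, sub_self]
      rw [hrow0]
      exact Submodule.zero_mem _
    · by_cases h2 : (i : ℕ) < s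
      · have hj : (i : ℕ) - p < s - p := by omega
        have hieq : (⟨p + ((i : ℕ) - p), by omega⟩ : Fin N) = i := by
          apply Fin.ext
          show p + ((i : ℕ) - p) = (i : ℕ)
          omega
        have : (Y - A * X) i = g2 ⟨(i : ℕ) - p, hj⟩ := by
          show (Y - A * X) i = (Y - A * X) ⟨p + ((i : ℕ) - p), _⟩
          rw [hieq]
        rw [this]
        exact Submodule.subset_span ⟨⟨(i : ℕ) - p, hj⟩, rfl⟩
      · have hiw : ¬ ((i : ℕ) < w) := by omega
        have hrow0 : (Y - A * X) i = 0 := by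
          rw [hDrow i, dif_neg hiw, dif_neg h2, sub_self]
        rw [hrow0]
        exact Submodule.zero_mem _
  have hrankD : (Y - A * X).rank ≤ s - p := by
    rw [rank_eq_finrank_rowSpace]
    have hle : rowSpace (Y - A * X) ≤ Submodule.span K (Set.range g2) := by
      rw [show rowSpace (Y - A * X) =
        Submodule.span K (Set.range fun i => (Y - A * X) i) from rfl]
      apply Submodule.span_le.2
      rintro x ⟨i, rfl⟩
      exact hmem i
    have h8 : finrank K ↥(rowSpace (Y - A * X)) ≤
        finrank K ↥(Submodule.span K (Set.range g2)) := Submodule.finrank_mono hle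
    have h9 := finrank_range_le_card (R := K) g2
    simp only [Set.finrank, Fintype.card_fin] at h9
    omega
  have hdisc1 : discRho ρ X Y ≤ s - p := by
    refine le_trans (Nat.sInf_le ⟨A, hArank', rfl⟩) hrankD
  have hdelta : deltaRho (N := N) ρ X X' ≤ s - p := by
    have hmem2 : discRho ρ X Y + discRho ρ X' Y ∈
        {e : ℕ | ∃ Y : Matrix (Fin N) (Fin m) K, e = discRho ρ X Y + discRho ρ X' Y} :=
      ⟨Y, rfl⟩
    have := Nat.sInf_le hmem2
    have hsum : discRho ρ X Y + discRho ρ X' Y ≤ s - p := by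
      rw [hdisc2]
      omega
    exact le_trans this hsum
  have hinj : injDist U V = max u v - d := rfl
  rw [hinj]
  omega

end upper

section final
variable {K : Type*} [Field K] [Fintype K] {n m N : ℕ}

lemma lower_le (ρ : ℕ) (hNρ : n - ρ ≤ N) (X X' : Matrix (Fin n) (Fin m) K) :
    injDist (rowSpace X) (rowSpace X') - ρ ≤ deltaRho (N := N) ρ X X' := by
  classical
  have hne : {e : ℕ | ∃ Y : Matrix (Fin N) (Fin m) K,
      e = discRho ρ X Y + discRho ρ X' Y}.Nonempty := ⟨_, ⟨0, rfl⟩⟩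
  have h1 : deltaRho (N := N) ρ X X' ∈ {e : ℕ | ∃ Y : Matrix (Fin N) (Fin m) K,
      e = discRho ρ X Y + discRho ρ X' Y} := Nat.sInf_mem hne
  obtain ⟨Y, hY⟩ := h1
  obtain ⟨A0, hA0⟩ := exists_bigrank (K := K) (n := n) (N := N) ρ hNρ
  have hne1 : {r : ℕ | ∃ A : Matrix (Fin N) (Fin n) K,
      n - ρ ≤ A.rank ∧ r = (Y - A * X).rank}.Nonempty := ⟨_, A0, hA0, rfl⟩
  have hne2 : {r : ℕ | ∃ A : Matrix (Fin N) (Fin n) K,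
      n - ρ ≤ A.rank ∧ r = (Y - A * X').rank}.Nonempty := ⟨_, A0, hA0, rfl⟩
  have h2 : discRho ρ X Y ∈ {r : ℕ | ∃ A : Matrix (Fin N) (Fin n) K,
      n - ρ ≤ A.rank ∧ r = (Y - A * X).rank} := Nat.sInf_mem hne1
  have h3 : discRho ρ X' Y ∈ {r : ℕ | ∃ A : Matrix (Fin N) (Fin n) K,
      n - ρ ≤ A.rank ∧ r = (Y - A * X').rank} := Nat.sInf_mem hne2
  obtain ⟨A, hA, hAr⟩ := h2
  obtain ⟨A', hA', hA'r⟩ := h3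
  have hlb := lower_bound_elem ρ X X' Y A A' hA hA'
  omega

lemma deltaRho_comm (ρ : ℕ) (X X' : Matrix (Fin n) (Fin m) K) :
    deltaRho (N := N) ρ X X' = deltaRho (N := N) ρ X' X := by
  unfold deltaRho
  congr 1
  ext e
  constructor <;> rintro ⟨Y, hY⟩ <;> exact ⟨Y, by omega⟩

lemma injDist_comm' {mm : ℕ} (U V : Submodule K (Fin mm → K)) :
    injDist U V = injDist V U := by
  unfold injDist
  rw [max_comm, inf_comm]

end final

/-- For `N ≥ n − ρ`, `δ_ρ(X,X') = [d_I(⟨X⟩,⟨X'⟩) − ρ]⁺` (the truncated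
natural-number subtraction is exactly the positive part). -/
theorem deltaRho_eq_injDist {K : Type*} [Field K] [Fintype K] {n m N : ℕ}
    (hn : 0 < n) (hm : 0 < m) (hN : 0 < N) (ρ : ℕ) (hNρ : n - ρ ≤ N)
    (X X' : Matrix (Fin n) (Fin m) K) :
    deltaRho (N := N) ρ X X' = injDist (rowSpace X) (rowSpace X') - ρ := by
  apply le_antisymm
  · rcases le_total (X'.rank) (X.rank) with h | h
    · exact upper_le ρ hNρ X X' h
    · rw [deltaRho_comm, injDist_comm']
      exact upper_le ρ hNρ X' X h
  · exact lower_le ρ hNρ X X'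
end
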